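/- arXiv:0707.4436 — 2 statements merged into one kernel-verified Lean document; each statement's English description precedes it below -/
import Mathlib

section
/- Let p be a prime, let g : ℤ_p → [0,1] be any function, let a_1, …, a_k be k distinguished non-zero elements of ℤ_p, and let E ≥ 0 be an integer. Then at least one of the following two conclusions holds. (Vanishing generalized balanced function) There exists a function h : ℤ_p → [-1,1] such that h(n) ≥ 0 for every n in the support of g, h(n) ≤ 0 for every n outside the support of g, Σ_n h(n) = 0, the ℓ¹-norm Σ_n |h(n)| is at least E, and the Fourier transform ĥ vanishes at a_1, a_2, …, a_k. (Generalized balanced function with small spectral support) Or there exists a function h : ℤ_p → ℝ whose Fourier transform ĥ is supported inside the set {0} ∪ {a_1,…,a_k} ∪ {−a_1,…,−a_k}, and such that, apart from at most (2k+2)·E exceptional elements n of ℤ_p, one has h(n) > 0 whenever n lies in the support of g and h(n) < 0 whenever n lies outside the support of g. -/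
open Finset

/-- The Fourier transform on `ZMod p`: `f̂(a) = ∑_n f(n) ω^{an}` with `ω = e^{2πi/p}`. -/
noncomputable def zmodFourier {p : ℕ} [NeZero p] (f : ZMod p → ℂ) (a : ZMod p) : ℂ :=
  ∑ n : ZMod p, f n * Complex.exp (2 * Real.pi * Complex.I * ((a * n).val : ℂ) / (p : ℂ))

/-! ### Auxiliary lemmas on the additive characters of `ZMod p` -/

/-- The character value `e(c n / p)`. -/
noncomputable def eF (p : ℕ) [NeZero p] (c n : ZMod p) : ℂ :=
  Complex.exp (2 * Real.pi * Complex.I * ((c * n).val : ℂ) / (p : ℂ))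

section eFLemmas

variable {p : ℕ} [Fact p.Prime]

lemma eF_eq_pow (c n : ZMod p) :
    eF p c n = Complex.exp (2 * Real.pi * Complex.I / p) ^ (c * n).val := by
  rw [eF, ← Complex.exp_nat_mul]
  ring_nf

lemma zeta_pow_p : Complex.exp (2 * Real.pi * Complex.I / p) ^ p = 1 :=
  (Complex.isPrimitiveRoot_exp p (Fact.out (p := p.Prime)).ne_zero).pow_eq_one

lemma zeta_ne_one : Complex.exp (2 * Real.pi * Complex.I / p) ≠ 1 :=
  (Complex.isPrimitiveRoot_exp p (Fact.out (p := p.Prime)).ne_zero).ne_one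
    (Fact.out (p := p.Prime)).one_lt

lemma zeta_pow_congr {A B : ℕ} (h : A % p = B % p) :
    Complex.exp (2 * Real.pi * Complex.I / p) ^ A
      = Complex.exp (2 * Real.pi * Complex.I / p) ^ B := by
  set z := Complex.exp (2 * Real.pi * Complex.I / p)
  have key : ∀ C : ℕ, z ^ C = z ^ (C % p) := by
    intro C
    conv_lhs => rw [← Nat.div_add_mod C p]
    rw [pow_add, pow_mul, zeta_pow_p, one_pow, one_mul]
  rw [key A, key B, h]

lemma eF_mul (c d n : ZMod p) : eF p c n * eF p d n = eF p (c + d) n := by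
  rw [eF_eq_pow, eF_eq_pow, eF_eq_pow, ← pow_add]
  apply zeta_pow_congr
  rw [add_mul, ZMod.val_add, Nat.mod_mod_of_dvd _ dvd_rfl]

lemma eF_zero_left (n : ZMod p) : eF p 0 n = 1 := by
  simp [eF]

lemma eF_conj (c n : ZMod p) : (starRingEnd ℂ) (eF p c n) = eF p (-c) n := by
  have h1 : eF p c n * eF p (-c) n = 1 := by rw [eF_mul]; simp [eF_zero_left]
  have h2 : (starRingEnd ℂ) (eF p c n) = (eF p c n)⁻¹ := by
    rw [eF, ← Complex.exp_conj, ← Complex.exp_neg]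
    congr 1
    simp only [map_div₀, map_mul, map_ofNat, Complex.conj_ofReal, Complex.conj_I,
      Complex.conj_natCast]
    ring
  rw [h2, inv_eq_of_mul_eq_one_right h1]

lemma eF_sum_eq_zero {c : ZMod p} (hc : c ≠ 0) : ∑ n : ZMod p, eF p c n = 0 := by
  have h1 : ∑ n : ZMod p, eF p c n = ∑ n : ZMod p, eF p 1 n := by
    apply Fintype.sum_equiv (Equiv.mulLeft₀ c hc)
    intro n
    simp [eF, Equiv.mulLeft₀]
  rw [h1]
  have h2 : ∑ n : ZMod p, eF p 1 n
      = ∑ i ∈ Finset.range p, Complex.exp (2 * Real.pi * Complex.I / p) ^ i := by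
    apply Finset.sum_bij (fun (n : ZMod p) _ => n.val)
    · intro n _; exact Finset.mem_range.2 (ZMod.val_lt n)
    · intro n _ m _ h; exact ZMod.val_injective p h
    · intro j hj
      exact ⟨(j : ZMod p), Finset.mem_univ _, ZMod.val_cast_of_lt (Finset.mem_range.1 hj)⟩
    · intro n _; rw [eF_eq_pow, one_mul]
  rw [h2, geom_sum_eq zeta_ne_one, zeta_pow_p]
  simp

end eFLemmas

lemma zmodFourier_eq {p : ℕ} [NeZero p] (f : ZMod p → ℂ) (b : ZMod p) :
    zmodFourier f b = ∑ n : ZMod p, f n * eF p b n := rfl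

/-! ### The Carathéodory / separation alternative -/

theorem carath_alt {F : Type*} [NormedAddCommGroup F] [NormedSpace ℝ F] [FiniteDimensional ℝ F]
    {ι : Type*} [Fintype ι] [DecidableEq ι] (w : ι → F) (E : ℕ) :
    (∃ t : ι → ℝ, (∀ n, 0 ≤ t n ∧ t n ≤ 1) ∧ (∑ n, t n • w n = 0) ∧ ((E : ℝ) ≤ ∑ n, t n)) ∨
    (∃ (φ : F →L[ℝ] ℝ) (Ex : Finset ι), Ex.card ≤ (Module.finrank ℝ F + 1) * E ∧
      ∀ n ∉ Ex, 0 < φ (w n)) := by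
  classical
  set d := Module.finrank ℝ F with hd
  have key : ∀ e : ℕ,
      (∃ (t : ι → ℝ) (U : Finset ι), (∀ n, 0 ≤ t n ∧ t n ≤ 1) ∧ (∀ n ∉ U, t n = 0) ∧
        U.card ≤ (d + 1) * e ∧ (∑ n, t n) = (e : ℝ) ∧ ∑ n, t n • w n = 0) ∨
      (∃ (φ : F →L[ℝ] ℝ) (Ex : Finset ι), Ex.card ≤ (d + 1) * e ∧ ∀ n ∉ Ex, 0 < φ (w n)) := by
    intro e
    induction e with
    | zero =>
      exact Or.inl ⟨0, ∅, fun n => by norm_num, fun n _ => rfl, by simp, by simp, by simp⟩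
    | succ e IH =>
      rcases IH with ⟨t, U, ht01, htU, hUcard, htsum, htw⟩ | ⟨φ, Ex, hcard, hφ⟩
      · by_cases h0 : (0 : F) ∈ convexHull ℝ (w '' {n | n ∉ U})
        · -- Carathéodory step
          rw [convexHull_eq_union] at h0
          simp only [Set.mem_iUnion] at h0
          obtain ⟨T, hTsub, hTai, hT0⟩ := h0
          have hTcard : T.card ≤ d + 1 := by
            have h1 := hTai.card_le_finrank_succ
            have h2 : Module.finrank ℝ (vectorSpan ℝ (Set.range ((↑) : T → F))) ≤ d :=
              Submodule.finrank_le _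
            rw [Fintype.card_coe] at h1
            omega
          rw [Finset.convexHull_eq] at hT0
          obtain ⟨W, hW0, hW1, hWc⟩ := hT0
          rw [Finset.centerMass_eq_of_sum_1 _ _ hW1] at hWc
          simp only [id] at hWc
          -- choose preimages
          have hsec : ∀ y : T, ∃ n, n ∉ U ∧ w n = (y : F) := by
            intro y
            have := hTsub y.2
            simpa [Set.mem_image] using this
          choose σ hσU hσw using hsec
          set T' : Finset ι := Finset.image σ Finset.univ with hT'
          have hT'card : T'.card ≤ d + 1 := by
            calc T'.card ≤ Fintype.card T := Finset.card_image_le.trans (by simp)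
            _ = T.card := Fintype.card_coe T
            _ ≤ d + 1 := hTcard
          set s : ι → ℝ := fun n => ∑ y : T, if σ y = n then W y else 0 with hs
          have hs_nonneg : ∀ n, 0 ≤ s n := by
            intro n
            apply Finset.sum_nonneg
            intro y _
            split
            · exact hW0 _ y.2
            · exact le_rfl
          have hs_le : ∀ n, s n ≤ 1 := by
            intro n
            calc s n ≤ ∑ y : T, W (y : F) := by
                  apply Finset.sum_le_sum
                  intro y _
                  split
                  · exact le_rfl
                  · exact hW0 _ y.2
              _ = ∑ x ∈ T, W x := by
                  rw [Finset.univ_eq_attach, Finset.sum_attach T (fun x => W x)]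
              _ = 1 := hW1
          have hs_supp : ∀ n ∉ T', s n = 0 := by
            intro n hn
            apply Finset.sum_eq_zero
            intro y _
            have : σ y ≠ n := fun h => hn (h ▸ Finset.mem_image_of_mem σ (Finset.mem_univ y))
            simp [this]
          have h1 : ∀ y : T, ∑ n, (if σ y = n then W (y : F) else 0) • w n
              = W (y : F) • w (σ y) := by
            intro y
            rw [Finset.sum_eq_single (σ y)]
            · simp
            · intro b _ hb
              simp [Ne.symm hb]
            · intro hb
              exact absurd (Finset.mem_univ _) hb
          have hsw : ∑ n, s n • w n = 0 := by
            simp only [hs, Finset.sum_smul]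
            rw [Finset.sum_comm]
            calc ∑ y : T, ∑ n, (if σ y = n then W (y : F) else 0) • w n
                = ∑ y : T, W (y : F) • w (σ y) :=
                  Finset.sum_congr rfl fun y _ => h1 y
              _ = ∑ y : T, W (y : F) • (y : F) := by
                  simp only [hσw]
              _ = ∑ x ∈ T, W x • x := by
                  rw [Finset.univ_eq_attach, Finset.sum_attach T (fun x => W x • x)]
              _ = 0 := hWc
          have hssum : ∑ n, s n = 1 := by
            rw [hs]
            rw [Finset.sum_comm]
            calc ∑ y : T, ∑ n : ι, (if σ y = n then W (y : F) else 0)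
                = ∑ y : T, W (y : F) := by
                  apply Finset.sum_congr rfl
                  intro y _
                  rw [Finset.sum_eq_single (σ y)]
                  · simp
                  · intro b _ hb
                    simp [Ne.symm hb]
                  · intro hb
                    exact absurd (Finset.mem_univ _) hb
              _ = ∑ x ∈ T, W x := by
                  rw [Finset.univ_eq_attach, Finset.sum_attach T (fun x => W x)]
              _ = 1 := hW1
          have hT'U : ∀ n ∈ T', n ∉ U := by
            intro n hn
            rw [hT', Finset.mem_image] at hn
            obtain ⟨y, _, hy⟩ := hn
            exact hy ▸ hσU y
          refine Or.inl ⟨fun n => t n + s n, U ∪ T', ?_, ?_, ?_, ?_, ?_⟩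
          · intro n
            constructor
            · show (0 : ℝ) ≤ t n + s n
              have := (ht01 n).1; have := hs_nonneg n; linarith
            · show t n + s n ≤ 1
              by_cases hn : n ∈ U
              · have h2 : n ∉ T' := fun h => hT'U n h hn
                rw [hs_supp n h2, add_zero]
                exact (ht01 n).2
              · rw [htU n hn, zero_add]
                exact hs_le n
          · intro n hn
            rw [Finset.mem_union] at hn
            push_neg at hn
            show t n + s n = 0
            rw [htU n hn.1, hs_supp n hn.2, add_zero]
          · calc (U ∪ T').card ≤ U.card + T'.card := Finset.card_union_le _ _
              _ ≤ (d + 1) * e + (d + 1) := Nat.add_le_add hUcard hT'card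
              _ = (d + 1) * (e + 1) := by ring
          · rw [Finset.sum_add_distrib, htsum, hssum]
            push_cast
            ring
          · simp only [add_smul, Finset.sum_add_distrib, htw, hsw, add_zero]
        · -- separation step
          have hfin : (w '' {n | n ∉ U}).Finite := (Set.toFinite _).image w
          obtain ⟨φ, u, hu0, hub⟩ := _root_.geometric_hahn_banach_point_closed
            (convex_convexHull ℝ _) (hfin.isCompact_convexHull ℝ).isClosed h0
          refine Or.inr ⟨φ, U, le_trans hUcard (Nat.mul_le_mul_left _ (Nat.le_succ e)),
            fun n hn => ?_⟩
          have h1 : u < φ (w n) := hub _ (subset_convexHull ℝ _ ⟨n, hn, rfl⟩)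
          have h2 : (0 : ℝ) < u := by simpa using hu0
          linarith
      · exact Or.inr ⟨φ, Ex, le_trans hcard (Nat.mul_le_mul_left _ (Nat.le_succ e)), hφ⟩
  rcases key E with ⟨t, U, ht01, _, _, htsum, htw⟩ | h
  · exact Or.inl ⟨t, ht01, htw, le_of_eq htsum.symm⟩
  · exact Or.inr h

/-- Either there is a vanishing generalized balanced function for the support of `g`
with ℓ¹-norm at least `E` whose Fourier transform vanishes at `a_1, …, a_k`, or there
is a generalized balanced function (with at most `(2k+2)E` exceptions) whose Fourier
transform is supported in `{0} ∪ {a_1,…,a_k} ∪ {−a_1,…,−a_k}`. -/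
theorem vanishing_or_small_spectral_support_balanced_function
    (p : ℕ) [Fact p.Prime] (g : ZMod p → ℝ) (hg : ∀ n, g n ∈ Set.Icc (0 : ℝ) 1)
    (k : ℕ) (a : Fin k → ZMod p) (ha : ∀ i, a i ≠ 0) (E : ℕ) :
    (∃ h : ZMod p → ℝ,
      (∀ n, h n ∈ Set.Icc (-1 : ℝ) 1) ∧
      (∀ n, g n ≠ 0 → 0 ≤ h n) ∧
      (∀ n, g n = 0 → h n ≤ 0) ∧
      (∑ n : ZMod p, h n = 0) ∧
      ((E : ℝ) ≤ ∑ n : ZMod p, |h n|) ∧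
      (∀ i : Fin k, zmodFourier (fun n => (h n : ℂ)) (a i) = 0)) ∨
    (∃ h : ZMod p → ℝ,
      (∀ b : ZMod p, zmodFourier (fun n => (h n : ℂ)) b ≠ 0 →
        b = 0 ∨ ∃ i : Fin k, b = a i ∨ b = -(a i)) ∧
      (∃ Ex : Finset (ZMod p), Ex.card ≤ (2 * k + 2) * E ∧
        ∀ n ∉ Ex, (g n ≠ 0 → 0 < h n) ∧ (g n = 0 → h n < 0))) := by
  classical
  have hfr : Module.finrank ℝ (ℝ × (Fin k → ℂ)) = 1 + 2 * k := by
    rw [Module.finrank_prod, Module.finrank_self, Module.finrank_pi_fintype]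
    simp [Complex.finrank_real_complex, mul_comm]
  set ε : ZMod p → ℝ := fun n => if g n = 0 then -1 else 1 with hε
  set v : ZMod p → ℝ × (Fin k → ℂ) := fun n => (1, fun i => eF p (a i) n) with hv
  set w : ZMod p → ℝ × (Fin k → ℂ) := fun n => ε n • v n with hw
  have hε1 : ∀ n, g n ≠ 0 → ε n = 1 := by intro n hn; simp only [hε]; rw [if_neg hn]
  have hε0 : ∀ n, g n = 0 → ε n = -1 := by intro n hn; simp only [hε]; rw [if_pos hn]
  have hεcases : ∀ n, ε n = 1 ∨ ε n = -1 := by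
    intro n
    by_cases hn : g n = 0
    · exact Or.inr (hε0 n hn)
    · exact Or.inl (hε1 n hn)
  rcases carath_alt w E with ⟨t, ht01, htw, htsum⟩ | ⟨φ, Ex, hcard, hφ⟩
  · -- vanishing balanced function
    refine Or.inl ⟨fun n => ε n * t n, ?_, ?_, ?_, ?_, ?_, ?_⟩
    · intro n
      have h1 := (ht01 n).1
      have h2 := (ht01 n).2
      have hmem : (-1 : ℝ) ≤ ε n * t n ∧ ε n * t n ≤ 1 := by
        rcases hεcases n with h | h <;> rw [h] <;> constructor <;> linarith
      exact Set.mem_Icc.mpr hmem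
    · intro n hgn
      show 0 ≤ ε n * t n
      rw [hε1 n hgn, one_mul]; exact (ht01 n).1
    · intro n hgn
      show ε n * t n ≤ 0
      rw [hε0 n hgn]
      have := (ht01 n).1
      linarith
    · have := congrArg Prod.fst htw
      rw [Prod.fst_sum] at this
      simp only [hw, hv, Prod.smul_fst, smul_eq_mul, mul_one, Prod.fst_zero] at this
      rw [← this]
      exact Finset.sum_congr rfl fun n _ => by ring
    · have habs : ∀ n, |ε n * t n| = t n := by
        intro n
        have h1 := (ht01 n).1
        rcases hεcases n with h | h <;> rw [h] <;> simp [abs_of_nonneg h1]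
      calc (E : ℝ) ≤ ∑ n : ZMod p, t n := htsum
        _ = ∑ n : ZMod p, |ε n * t n| := by simp_rw [habs]
    · intro i
      have := congrArg (fun z : ℝ × (Fin k → ℂ) => z.2 i) htw
      simp only [Prod.snd_sum] at this
      rw [Finset.sum_apply] at this
      simp only [hw, hv, Prod.smul_snd, Pi.smul_apply, Pi.zero_apply, Prod.snd_zero] at this
      rw [zmodFourier_eq, ← this]
      apply Finset.sum_congr rfl
      intro n _
      rw [smul_smul, Complex.real_smul]
      push_cast
      ring
  · -- small spectral support
    refine Or.inr ⟨fun n => φ (v n), ?_, Ex, ?_, ?_⟩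
    · intro b hb
      by_contra hcon
      push_neg at hcon
      obtain ⟨hb0, hbi⟩ := hcon
      apply hb
      have S1 : ∑ n : ZMod p, eF p b n = 0 := eF_sum_eq_zero hb0
      have S2 : ∀ i, ∑ n : ZMod p, eF p b n * eF p (a i) n = 0 := by
        intro i
        have hne : b + a i ≠ 0 := by
          intro h
          exact (hbi i).2 (eq_neg_of_add_eq_zero_left h)
        simp_rw [eF_mul]
        exact eF_sum_eq_zero hne
      have S3 : ∀ i, ∑ n : ZMod p, (starRingEnd ℂ) (eF p b n) * eF p (a i) n = 0 := by
        intro i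
        have hne : -b + a i ≠ 0 := by
          intro h
          rw [neg_add_eq_sub, sub_eq_zero] at h
          exact (hbi i).1 h.symm
        simp_rw [eF_conj, eF_mul]
        exact eF_sum_eq_zero hne
      have key : ∀ c : ZMod p → ℝ,
          ((∑ n : ZMod p, c n • v n) = 0) → ∑ n : ZMod p, c n * φ (v n) = 0 := by
        intro c hc
        have : ∑ n : ZMod p, c n * φ (v n) = φ (∑ n : ZMod p, c n • v n) := by
          rw [map_sum]
          exact Finset.sum_congr rfl fun n _ => by rw [map_smul, smul_eq_mul]
        rw [this, hc, map_zero]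
      have hre : ∑ n : ZMod p, (eF p b n).re • v n = 0 := by
        rw [Prod.ext_iff]
        constructor
        · rw [Prod.fst_sum]
          simp only [hv, Prod.smul_fst, smul_eq_mul, mul_one, Prod.fst_zero]
          have := congrArg Complex.re S1
          rw [Complex.re_sum] at this
          simpa using this
        · rw [Prod.snd_sum]
          funext i
          rw [Finset.sum_apply]
          simp only [hv, Prod.smul_snd, Pi.smul_apply, Complex.real_smul, Prod.snd_zero,
            Pi.zero_apply]
          have hterm : ∀ n : ZMod p, ((eF p b n).re : ℂ) * eF p (a i) n
              = eF p b n * eF p (a i) n / 2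
                + (starRingEnd ℂ) (eF p b n) * eF p (a i) n / 2 := by
            intro n
            have h2 : ((eF p b n).re : ℂ) * 2 = eF p b n + (starRingEnd ℂ) (eF p b n) := by
              rw [Complex.add_conj]; push_cast; ring
            calc ((eF p b n).re : ℂ) * eF p (a i) n
                = (((eF p b n).re : ℂ) * 2) * eF p (a i) n / 2 := by ring
              _ = (eF p b n + (starRingEnd ℂ) (eF p b n)) * eF p (a i) n / 2 := by rw [h2]
              _ = _ := by ring
          simp_rw [hterm]
          rw [Finset.sum_add_distrib, ← Finset.sum_div, ← Finset.sum_div, S2 i, S3 i]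
          norm_num
      have him : ∑ n : ZMod p, (eF p b n).im • v n = 0 := by
        rw [Prod.ext_iff]
        constructor
        · rw [Prod.fst_sum]
          simp only [hv, Prod.smul_fst, smul_eq_mul, mul_one, Prod.fst_zero]
          have := congrArg Complex.im S1
          rw [Complex.im_sum] at this
          simpa using this
        · rw [Prod.snd_sum]
          funext i
          rw [Finset.sum_apply]
          simp only [hv, Prod.smul_snd, Pi.smul_apply, Complex.real_smul, Prod.snd_zero,
            Pi.zero_apply]
          have hI : (2 : ℂ) * Complex.I ≠ 0 := by
            simp [Complex.I_ne_zero]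
          have hterm : ∀ n : ZMod p, ((eF p b n).im : ℂ) * eF p (a i) n
              = eF p b n * eF p (a i) n / (2 * Complex.I)
                - (starRingEnd ℂ) (eF p b n) * eF p (a i) n / (2 * Complex.I) := by
            intro n
            have h3 : ((eF p b n).im : ℂ) * (2 * Complex.I)
                = eF p b n - (starRingEnd ℂ) (eF p b n) := by
              rw [Complex.sub_conj]; push_cast; ring
            calc ((eF p b n).im : ℂ) * eF p (a i) n
                = (((eF p b n).im : ℂ) * (2 * Complex.I)) * eF p (a i) n / (2 * Complex.I) := by
                  field_simp
              _ = (eF p b n - (starRingEnd ℂ) (eF p b n)) * eF p (a i) n / (2 * Complex.I) := by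
                  rw [h3]
              _ = _ := by ring
          simp_rw [hterm]
          rw [Finset.sum_sub_distrib, ← Finset.sum_div, ← Finset.sum_div, S2 i, S3 i]
          norm_num
      have hre' := key _ hre
      have him' := key _ him
      rw [zmodFourier_eq]
      apply Complex.ext
      · rw [Complex.re_sum]
        simp only [Complex.re_ofReal_mul]
        simpa [mul_comm] using hre'
      · rw [Complex.im_sum]
        simp only [Complex.im_ofReal_mul]
        simpa [mul_comm] using him'
    · rw [hfr] at hcard
      exact le_trans hcard (le_of_eq (by ring))
    · intro n hn
      have h1 : 0 < ε n * φ (v n) := by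
        have := hφ n hn
        rwa [hw, map_smul, smul_eq_mul] at this
      constructor
      · intro hgn
        rw [hε1 n hgn, one_mul] at h1
        exact h1
      · intro hgn
        rw [hε0 n hgn] at h1
        linarith
end

section
/- Suppose M is an m × n real matrix with n > m. Then one of the following holds: either there exists a non-negative vector v = (v(1),…,v(n)) ∈ ℝ_{≥0}^n with Σ_j v(j) = 1, having at most m+1 non-zero entries, and satisfying M v = 0; or there exists a vector w ∈ ℝ^m such that every entry of the row vector w M is strictly positive. -/
/-- For an `m × n` real matrix `M` with `n > m`: either there is a probability vector
`v` with at most `m + 1` nonzero entries and `M v = 0`, or there is a row vector `w`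
such that every entry of `w M` is strictly positive. -/
theorem farkas_type_alternative (m n : ℕ) (hn : n > m) (M : Matrix (Fin m) (Fin n) ℝ) :
    (∃ v : Fin n → ℝ, (∀ j, 0 ≤ v j) ∧ (∑ j, v j = 1) ∧
      ({j : Fin n | v j ≠ 0}).ncard ≤ m + 1 ∧ M.mulVec v = 0) ∨
    (∃ w : Fin m → ℝ, ∀ j, 0 < Matrix.vecMul w M j) := by
  classical
  set col : Fin n → (Fin m → ℝ) := fun j i => M i j with hcol
  set S : Set (Fin m → ℝ) := Set.range col with hS
  by_cases h0 : (0 : Fin m → ℝ) ∈ convexHull ℝ S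
  · -- Carathéodory
    left
    obtain ⟨ι, _, z, w, hzS, haff, hwpos, hwsum, hzsum⟩ :=
      eq_pos_convex_span_of_mem_convexHull h0
    -- choose indices for each point
    have hch : ∀ i : ι, ∃ k : Fin n, col k = z i := by
      intro i
      have : z i ∈ S := hzS ⟨i, rfl⟩
      exact this
    choose g hg using hch
    have hginj : Function.Injective g := by
      intro i1 i2 h
      apply haff.injective
      rw [← hg i1, ← hg i2, h]
    set v : Fin n → ℝ := fun k => ∑ i ∈ Finset.univ.filter (fun i => g i = k), w i with hv
    have hcard : Fintype.card ι ≤ m + 1 := by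
      have h1 := haff.card_le_finrank_succ
      have h2 : Module.finrank ℝ (vectorSpan ℝ (Set.range z)) ≤ m := by
        have := Submodule.finrank_le (vectorSpan ℝ (Set.range z))
        simpa using this
      omega
    refine ⟨v, ?_, ?_, ?_, ?_⟩
    · intro j
      exact Finset.sum_nonneg fun i _ => (hwpos i).le
    · rw [← hwsum]
      exact Finset.sum_fiberwise _ _ _
    · have hsub : {j : Fin n | v j ≠ 0} ⊆ Set.range g := by
        intro j hj
        by_contra hr
        apply hj
        have : Finset.univ.filter (fun i => g i = j) = ∅ := by
          ext i
          simp only [Finset.mem_filter, Finset.mem_univ, true_and, Finset.notMem_empty,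
            iff_false]
          intro h
          exact hr ⟨i, h⟩
        simp [hv, this]
      calc ({j : Fin n | v j ≠ 0}).ncard ≤ (Set.range g).ncard :=
            Set.ncard_le_ncard hsub (Set.finite_range g)
        _ = Fintype.card ι := by
            rw [← Set.image_univ, Set.ncard_image_of_injective _ hginj, Set.ncard_univ,
              Nat.card_eq_fintype_card]
        _ ≤ m + 1 := hcard
    · funext i0
      have hz0 := congrFun hzsum i0
      simp only [Finset.sum_apply, Pi.smul_apply, smul_eq_mul, Pi.zero_apply] at hz0
      simp only [Matrix.mulVec, dotProduct, Pi.zero_apply]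
      rw [← hz0, ← Finset.sum_fiberwise Finset.univ g (fun i => w i * z i i0)]
      apply Finset.sum_congr rfl
      intro k _
      simp only [hv]
      rw [Finset.mul_sum]
      apply Finset.sum_congr rfl
      intro i hi
      simp only [Finset.mem_filter] at hi
      have hz : z i i0 = M i0 k := by rw [← hg i, hi.2]
      rw [hz]
      ring
  · -- separation
    right
    have hSfin : S.Finite := Set.finite_range col
    obtain ⟨f, u, hfu, hu0⟩ :=
      geometric_hahn_banach_closed_point (convex_convexHull ℝ S)
        (hSfin.isCompact_convexHull ℝ).isClosed h0
    have hu : u < 0 := by simpa using hu0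
    refine ⟨fun i => -f (Pi.single i 1), fun j => ?_⟩
    have hcolj : col j ∈ convexHull ℝ S := subset_convexHull ℝ S ⟨j, rfl⟩
    have hneg : f (col j) < 0 := (hfu _ hcolj).trans hu
    have hrepr : Matrix.vecMul (fun i => -f (Pi.single i 1)) M j = -f (col j) := by
      have hcj : col j = ∑ i, (M i j) • (Pi.single i (1:ℝ) : Fin m → ℝ) := by
        funext i'
        simp [Pi.single_apply, mul_ite, Finset.sum_ite_eq', hcol]
      rw [hcj, map_sum]
      simp only [map_smul, smul_eq_mul]
      rw [← Finset.sum_neg_distrib, Matrix.vecMul, dotProduct]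
      apply Finset.sum_congr rfl
      intro i _
      ring
    rw [hrepr]
    linarith
end
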